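/- arXiv:1707.00610 — 2 statements merged into one kernel-verified Lean document; each statement's English description precedes it below -/
import Mathlib

section
/- For every Hurst parameter H ∈ (0,1/2), the fOU correlation function satisfies 𝒞_Z(s) = 1 − s^{2H}/Γ(2H+1) + o(s^{2H}) as s → 0⁺; that is, lim_{s→0⁺} ( 𝒞_Z(s) − 1 + s^{2H}/Γ(2H+1) ) / s^{2H} = 0. -/
open MeasureTheory Real Set Filter

lemma myRpow_add_le {x y p : ℝ} (hx : 0 ≤ x) (hy : 0 ≤ y) (hp : 0 ≤ p) (hp1 : p ≤ 1) :
    (x + y) ^ p ≤ x ^ p + y ^ p := by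
  have h := NNReal.rpow_add_le_add_rpow (⟨x, hx⟩ : NNReal) (⟨y, hy⟩ : NNReal) hp hp1
  have := NNReal.coe_le_coe.2 h
  exact this

lemma myAbs_rpow_sub_le {x y p : ℝ} (hx : 0 ≤ x) (hy : 0 ≤ y) (hp : 0 ≤ p) (hp1 : p ≤ 1) :
    |x ^ p - y ^ p| ≤ |x - y| ^ p := by
  rcases le_total x y with h | h
  · rw [abs_sub_comm, abs_of_nonneg (sub_nonneg.2 (Real.rpow_le_rpow hx h hp)),
      abs_sub_comm, abs_of_nonneg (sub_nonneg.2 h)]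
    have : y ^ p ≤ x ^ p + (y - x) ^ p := by
      calc y ^ p = (x + (y - x)) ^ p := by ring_nf
      _ ≤ x ^ p + (y - x) ^ p := myRpow_add_le hx (by linarith) hp hp1
    linarith
  · rw [abs_of_nonneg (sub_nonneg.2 (Real.rpow_le_rpow hy h hp)),
      abs_of_nonneg (sub_nonneg.2 h)]
    have : x ^ p ≤ y ^ p + (x - y) ^ p := by
      calc x ^ p = (y + (x - y)) ^ p := by ring_nf
      _ ≤ y ^ p + (x - y) ^ p := myRpow_add_le hy (by linarith) hp hp1
    linarith

lemma myMVT {a d p : ℝ} (ha : 0 < a) (hd : 0 < d) (hp : 0 < p) (hp1 : p ≤ 1) :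
    (a + d) ^ p - a ^ p ≤ p * d * a ^ (p - 1) := by
  have hab : a < a + d := by linarith
  obtain ⟨c, hc, hceq⟩ := exists_hasDerivAt_eq_slope (fun x => x ^ p)
    (fun x => p * x ^ (p - 1)) hab
    (by
      apply ContinuousOn.rpow_const continuousOn_id
      intro x hx
      exact Or.inl (by simp only [id]; rintro rfl; exact absurd hx.1 (by linarith)))
    (fun x hx => by
      have hx0 : x ≠ 0 := ne_of_gt (lt_trans ha hx.1)
      simpa [mul_comm] using Real.hasDerivAt_rpow_const (p := p) (Or.inl hx0))
  have hca : a ≤ c := hc.1.le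
  have hcp : c ^ (p - 1) ≤ a ^ (p - 1) :=
    Real.rpow_le_rpow_of_nonpos ha hca (by linarith)
  have hd' : (a + d) ^ p - a ^ p = p * c ^ (p - 1) * d := by
    have hne : a + d - a ≠ 0 := by linarith
    have := hceq
    field_simp at this
    linarith [this]
  rw [hd']
  have : p * c ^ (p - 1) * d ≤ p * a ^ (p - 1) * d := by
    apply mul_le_mul_of_nonneg_right _ hd.le
    exact mul_le_mul_of_nonneg_left hcp hp.le
  linarith

lemma myIntegrable_exp_abs_rpow {q : ℝ} (hq : -1 < q) :
    Integrable fun v : ℝ => Real.exp (-|v|) * |v| ^ q := by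
  have hIoi : IntegrableOn (fun v : ℝ => Real.exp (-|v|) * |v| ^ q) (Ioi 0) := by
    have h := Real.GammaIntegral_convergent (s := q + 1) (by linarith)
    simp only [add_sub_cancel_right] at h
    refine h.congr_fun (fun x hx => ?_) measurableSet_Ioi
    rw [abs_of_pos hx]
  have hIic : IntegrableOn (fun v : ℝ => Real.exp (-|v|) * |v| ^ q) (Iic 0) := by
    rw [← Measure.map_neg_eq_self (volume : Measure ℝ)]
    have m : MeasurableEmbedding fun x : ℝ => -x := (Homeomorph.neg ℝ).measurableEmbedding
    rw [m.integrableOn_map_iff]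
    simp_rw [Function.comp_def, abs_neg, neg_preimage, neg_Iic, neg_zero]
    exact Iff.mpr integrableOn_Ici_iff_integrableOn_Ioi hIoi
  have := hIic.union hIoi
  rwa [Iic_union_Ioi, integrableOn_univ] at this

lemma myIntegrable_exp_abs : Integrable fun v : ℝ => Real.exp (-|v|) := by
  have := myIntegrable_exp_abs_rpow (q := 0) (by norm_num)
  simpa using this

lemma myCont {p s : ℝ} (hp : 0 ≤ p) :
    Continuous fun v : ℝ => Real.exp (-|v|) * |s + v| ^ p := by
  apply Continuous.mul
  · exact Real.continuous_exp.comp (continuous_abs.neg)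
  · exact (continuous_abs.comp (continuous_const.add continuous_id)).rpow_const
      fun x => Or.inr hp

lemma myIntegrable_shift {p : ℝ} (s : ℝ) (hp : 0 < p) (hp1 : p ≤ 1) :
    Integrable fun v : ℝ => Real.exp (-|v|) * |s + v| ^ p := by
  have hG : Integrable fun v : ℝ => Real.exp (-|v|) * |s| ^ p + Real.exp (-|v|) * |v| ^ p :=
    (myIntegrable_exp_abs.mul_const _).add (myIntegrable_exp_abs_rpow (by linarith))
  refine Integrable.mono' hG ((myCont hp.le).aestronglyMeasurable) ?_
  filter_upwards with v
  rw [Real.norm_eq_abs, abs_of_nonneg (by positivity)]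
  have h1 : |s + v| ^ p ≤ |s| ^ p + |v| ^ p :=
    le_trans (Real.rpow_le_rpow (abs_nonneg _) (abs_add_le s v) hp.le)
      (myRpow_add_le (abs_nonneg _) (abs_nonneg _) hp.le hp1)
  have := Real.exp_pos (-|v|)
  nlinarith [Real.exp_pos (-|v|), Real.rpow_nonneg (abs_nonneg (s+v)) p]

lemma myG0 {q : ℝ} (hq : -1 < q) :
    ∫ v : ℝ, Real.exp (-|v|) * |v| ^ q = 2 * Real.Gamma (q + 1) := by
  have h := integral_comp_abs (f := fun x => Real.exp (-x) * x ^ q)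
  rw [Real.Gamma_eq_integral (by linarith : (0:ℝ) < q + 1)]
  simpa [add_sub_cancel_right] using h

lemma myPointwise {p s : ℝ} (hp : 0 < p) (hp1 : p < 1) (hs : 0 < s) (v : ℝ) :
    |Real.exp (-|v|) * |s + v| ^ p - Real.exp (-|v|) * |v| ^ p| ≤
      (Icc (-(2*s)) (2*s)).indicator (fun _ => s ^ p) v
        + (p * 2 ^ (1 - p) * s) * (Real.exp (-|v|) * |v| ^ (p - 1)) := by
  have hexp : Real.exp (-|v|) ≤ 1 := Real.exp_le_one_iff.2 (by simp [abs_nonneg])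
  have hexp0 : 0 < Real.exp (-|v|) := Real.exp_pos _
  have key : |Real.exp (-|v|) * |s + v| ^ p - Real.exp (-|v|) * |v| ^ p|
      = Real.exp (-|v|) * abs (|s + v| ^ p - |v| ^ p) := by
    rw [← mul_sub, abs_mul, abs_of_pos hexp0]
  rcases le_or_gt (|v|) (2*s) with hv | hv
  · -- near zero : use |s+v|^p - |v|^p| ≤ s^p
    have hmem : v ∈ Icc (-(2*s)) (2*s) := abs_le.1 hv
    rw [indicator_of_mem hmem]
    have h1 : abs (|s + v| ^ p - |v| ^ p) ≤ abs (|s + v| - |v|) ^ p :=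
      myAbs_rpow_sub_le (abs_nonneg _) (abs_nonneg _) hp.le hp1.le
    have h2 : abs (|s + v| - |v|) ≤ s := by
      have := abs_abs_sub_abs_le_abs_sub (s + v) v
      simpa [abs_of_pos hs] using this
    have h3 : abs (|s + v| - |v|) ^ p ≤ s ^ p := Real.rpow_le_rpow (abs_nonneg _) h2 hp.le
    have h4 : 0 ≤ (p * 2 ^ (1 - p) * s) * (Real.exp (-|v|) * |v| ^ (p - 1)) := by positivity
    rw [key]
    nlinarith [abs_nonneg (|s + v| ^ p - |v| ^ p)]
  · -- far : MVT bound
    rw [indicator_of_notMem (by intro hmem; exact absurd (abs_le.2 hmem) (not_le.2 hv))]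
    rw [key, zero_add]
    have hb : abs (|s + v| ^ p - |v| ^ p) ≤ p * 2 ^ (1 - p) * s * |v| ^ (p - 1) := by
      have h2p : (1:ℝ) ≤ 2 ^ (1 - p) :=
        Real.one_le_rpow (by norm_num) (by linarith)
      rcases lt_or_ge 0 v with hv0 | hv0
      · -- v > 2s > 0
        have hvv : 2 * s < v := by rwa [abs_of_pos hv0] at hv
        have habs1 : |s + v| = v + s := by rw [abs_of_pos (by linarith)]; ring
        have habs2 : |v| = v := abs_of_pos hv0
        rw [habs1, habs2]
        have hmono : v ^ p ≤ (v + s) ^ p :=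
          Real.rpow_le_rpow (by linarith) (by linarith) hp.le
        rw [abs_of_nonneg (by linarith)]
        have := myMVT (a := v) (d := s) (by linarith) hs hp hp1.le
        have hvp : v ^ (p - 1) ≤ 2 ^ (1 - p) * v ^ (p - 1) := by
          nlinarith [Real.rpow_nonneg (le_of_lt (show (0:ℝ) < v by linarith)) (p - 1)]
        nlinarith [Real.rpow_nonneg (le_of_lt (show (0:ℝ) < v by linarith)) (p - 1), hs]
      · -- v ≤ 0, |v| = -v > 2s
        have hvneg : v < 0 := by
          rcases lt_or_eq_of_le hv0 with h | h
          · exact h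
          · exfalso; rw [h] at hv; simp at hv; linarith
        have hvv : 2 * s < -v := by rwa [abs_of_neg hvneg] at hv
        have habs2 : |v| = -v := abs_of_neg hvneg
        have hsv : s + v < 0 := by linarith
        have habs1 : |s + v| = -v - s := by rw [abs_of_neg hsv]; ring
        rw [habs1, habs2]
        have ha : 0 < -v - s := by linarith
        have hmono : (-v - s) ^ p ≤ (-v) ^ p :=
          Real.rpow_le_rpow ha.le (by linarith) hp.le
        rw [abs_of_nonpos (by linarith)]
        have hm := myMVT (a := -v - s) (d := s) ha hs hp hp1.le
        have heq : -v - s + s = -v := by ring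
        rw [heq] at hm
        -- (-v-s)^(p-1) ≤ (-v/2)^(p-1) = 2^(1-p) * (-v)^(p-1)
        have hhalf : -v / 2 ≤ -v - s := by linarith
        have hd1 : (-v - s) ^ (p - 1) ≤ (-v / 2) ^ (p - 1) :=
          Real.rpow_le_rpow_of_nonpos (by linarith) hhalf (by linarith)
        have hd2 : (-v / 2) ^ (p - 1) = 2 ^ (1 - p) * (-v) ^ (p - 1) := by
          rw [Real.div_rpow (by linarith) (by norm_num), div_eq_mul_inv, mul_comm,
            ← Real.rpow_neg (by norm_num)]
          ring_nf
        have hd3 : p * s * (-v - s) ^ (p - 1) ≤ p * s * (2 ^ (1 - p) * (-v) ^ (p - 1)) := by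
          apply mul_le_mul_of_nonneg_left _ (by positivity)
          rw [← hd2]; exact hd1
        nlinarith [hd3]
    calc Real.exp (-|v|) * abs (|s + v| ^ p - |v| ^ p)
        ≤ Real.exp (-|v|) * (p * 2 ^ (1 - p) * s * |v| ^ (p - 1)) :=
          mul_le_mul_of_nonneg_left hb hexp0.le
      _ = p * 2 ^ (1 - p) * s * (Real.exp (-|v|) * |v| ^ (p - 1)) := by ring

lemma myKey {p : ℝ} (hp : 0 < p) (hp1 : p < 1) {s : ℝ} (hs : 0 < s) :
    |(∫ v : ℝ, Real.exp (-|v|) * |s + v| ^ p) - ∫ v : ℝ, Real.exp (-|v|) * |v| ^ p| ≤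
      4 * s * s ^ p + (p * 2 ^ (1 - p) * (2 * Real.Gamma p)) * s := by
  have hint1 := myIntegrable_shift s hp hp1.le
  have hint2 := myIntegrable_exp_abs_rpow (show (-1:ℝ) < p by linarith)
  have hintm1 := myIntegrable_exp_abs_rpow (show (-1:ℝ) < p - 1 by linarith)
  rw [← integral_sub hint1 hint2]
  have hF1 : Integrable ((Icc (-(2*s)) (2*s)).indicator (fun _ => s ^ p)) :=
    (integrable_indicator_iff measurableSet_Icc).2
      (integrableOn_const measure_Icc_lt_top.ne)
  have hF2 : Integrable (fun v : ℝ =>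
      (p * 2 ^ (1 - p) * s) * (Real.exp (-|v|) * |v| ^ (p - 1))) := hintm1.const_mul _
  set G : ℝ → ℝ := fun v => (Icc (-(2*s)) (2*s)).indicator (fun _ => s ^ p) v
        + (p * 2 ^ (1 - p) * s) * (Real.exp (-|v|) * |v| ^ (p - 1)) with hGdef
  have hG : Integrable G := hF1.add hF2
  have hb := norm_integral_le_of_norm_le
    (f := fun v : ℝ => Real.exp (-|v|) * |s + v| ^ p - Real.exp (-|v|) * |v| ^ p) hG
    (Filter.Eventually.of_forall fun v => by
      simpa [Real.norm_eq_abs, hGdef] using myPointwise hp hp1 hs v)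
  rw [Real.norm_eq_abs] at hb
  refine le_trans hb (le_of_eq ?_)
  rw [hGdef]
  rw [integral_add hF1 hF2, integral_indicator_const _ measurableSet_Icc,
    integral_const_mul _ _, myG0 (show (-1:ℝ) < p - 1 by linarith), sub_add_cancel,
    Real.volume_real_Icc]
  have : (2 * s - -(2 * s)) = 4 * s := by ring
  rw [this, max_eq_left (by linarith)]
  rw [smul_eq_mul]; ring

/-- The fOU correlation function
`𝒞_Z(s) = Γ(2H+1)⁻¹ ( (1/2) ∫_ℝ e^{-|v|} |s+v|^{2H} dv − s^{2H} )`. -/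
noncomputable def corrZ (H : ℝ) (s : ℝ) : ℝ :=
  (Real.Gamma (2 * H + 1))⁻¹ *
    ((1/2) * (∫ v : ℝ, Real.exp (-|v|) * |s + v| ^ (2 * H)) - s ^ (2 * H))

/-- For every `H ∈ (0,1/2)`,
`𝒞_Z(s) = 1 − s^{2H}/Γ(2H+1) + o(s^{2H})` as `s → 0⁺`, i.e.
`lim_{s→0⁺} ( 𝒞_Z(s) − 1 + s^{2H}/Γ(2H+1) ) / s^{2H} = 0`. -/
theorem corrZ_shortTime_expansion (H : ℝ) (hH : H ∈ Set.Ioo (0 : ℝ) (1/2)) :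
    Tendsto
      (fun s : ℝ =>
        (corrZ H s - 1 + s ^ (2 * H) / Real.Gamma (2 * H + 1)) / s ^ (2 * H))
      (nhdsWithin 0 (Set.Ioi 0)) (nhds 0) := by
  obtain ⟨hH0, hH1⟩ := hH
  set p : ℝ := 2 * H with hpdef
  have hp : 0 < p := by positivity
  have hp1 : p < 1 := by rw [hpdef]; linarith
  have hΓ : 0 < Real.Gamma (p + 1) := Real.Gamma_pos_of_pos (by linarith)
  set g : ℝ → ℝ := fun s => ∫ v : ℝ, Real.exp (-|v|) * |s + v| ^ p with hgdef
  set g0 : ℝ := ∫ v : ℝ, Real.exp (-|v|) * |v| ^ p with hg0def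
  have hg0 : g0 = 2 * Real.Gamma (p + 1) := myG0 (by linarith)
  -- rewrite target function
  have hfun : (fun s : ℝ =>
      (corrZ H s - 1 + s ^ (2 * H) / Real.Gamma (2 * H + 1)) / s ^ (2 * H))
      = fun s : ℝ => ((Real.Gamma (p + 1))⁻¹ * (1/2)) * ((g s - g0) / s ^ p) := by
    funext s
    have h1 : corrZ H s - 1 + s ^ (2 * H) / Real.Gamma (2 * H + 1)
        = (Real.Gamma (p + 1))⁻¹ * (1/2) * (g s - g0) := by
      rw [corrZ, hg0]
      field_simp
      ring
    rw [h1, mul_div_assoc]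
  rw [hfun]
  have hmain : Tendsto (fun s : ℝ => (g s - g0) / s ^ p)
      (nhdsWithin 0 (Set.Ioi 0)) (nhds 0) := by
    set K : ℝ := p * 2 ^ (1 - p) * (2 * Real.Gamma p) with hKdef
    have hK : 0 ≤ K := by
      have := Real.Gamma_pos_of_pos hp
      positivity
    -- bound function tendsto
    have hb1 : Tendsto (fun s : ℝ => 4 * s) (nhdsWithin 0 (Set.Ioi 0)) (nhds 0) := by
      have : Tendsto (fun s : ℝ => 4 * s) (nhds 0) (nhds (4 * 0)) :=
        (continuous_const.mul continuous_id).tendsto 0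
      rw [mul_zero] at this
      exact this.mono_left nhdsWithin_le_nhds
    have hb2 : Tendsto (fun s : ℝ => K * s ^ (1 - p)) (nhdsWithin 0 (Set.Ioi 0)) (nhds 0) := by
      have hc : ContinuousAt (fun s : ℝ => s ^ (1 - p)) 0 :=
        Real.continuousAt_rpow_const 0 (1 - p) (Or.inr (by linarith))
      have := hc.tendsto
      rw [Real.zero_rpow (by linarith : 1 - p ≠ 0)] at this
      have : Tendsto (fun s : ℝ => K * s ^ (1 - p)) (nhdsWithin 0 (Set.Ioi 0)) (nhds (K * 0)) :=
        (this.const_mul K).mono_left nhdsWithin_le_nhds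
      rwa [mul_zero] at this
    have hbt : Tendsto (fun s : ℝ => 4 * s + K * s ^ (1 - p))
        (nhdsWithin 0 (Set.Ioi 0)) (nhds 0) := by
      have := hb1.add hb2
      rwa [add_zero] at this
    rw [tendsto_zero_iff_norm_tendsto_zero]
    refine squeeze_zero' ?_ ?_ hbt
    · filter_upwards with s using norm_nonneg _
    · filter_upwards [self_mem_nhdsWithin] with s hs
      have hs : (0:ℝ) < s := hs
      have hsp : 0 < s ^ p := Real.rpow_pos_of_pos hs p
      rw [Real.norm_eq_abs, abs_div, abs_of_pos hsp]
      have hkey := myKey hp hp1 hs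
      have heq : 4 * s + K * s ^ (1 - p) = (4 * s * s ^ p + K * s) / s ^ p := by
        rw [Real.rpow_sub hs, Real.rpow_one]
        field_simp
      rw [heq]
      exact (div_le_div_iff_of_pos_right hsp).2 hkey
  have := hmain.const_mul ((Real.Gamma (p + 1))⁻¹ * (1/2))
  rwa [mul_zero] at this
end

section
/- For every Hurst parameter H ∈ (0,1/2), the fOU correlation function satisfies 𝒞_Z(s) = s^{2H-2}/Γ(2H−1) + o(s^{2H-2}) as s → ∞; that is, lim_{s→∞} ( 𝒞_Z(s) − s^{2H-2}/Γ(2H−1) ) / s^{2H-2} = 0, where Γ(2H−1) denotes the value of the Gamma function at 2H−1 ∈ (−1,0). -/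
open MeasureTheory Real Set Filter Topology

section Aux

lemma integrable_comp_abs {f : ℝ → ℝ} (hf : IntegrableOn f (Ioi 0)) :
    Integrable (fun x : ℝ => f |x|) := by
  have eqI : IntegrableOn (fun x : ℝ => f |x|) (Ioi 0) := by
    apply hf.congr_fun (fun x hx => by rw [abs_eq_self.mpr (le_of_lt hx)]) measurableSet_Ioi
  have int_Iic : IntegrableOn (fun x : ℝ => f |x|) (Iic 0) := by
    rw [← Measure.map_neg_eq_self (volume : Measure ℝ)]
    have m : MeasurableEmbedding fun x : ℝ => -x := (Homeomorph.neg ℝ).measurableEmbedding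
    rw [m.integrableOn_map_iff]
    simp_rw [Function.comp_def, abs_neg, neg_preimage, neg_Iic, neg_zero]
    exact Iff.mpr integrableOn_Ici_iff_integrableOn_Ioi eqI
  have h := int_Iic.union eqI
  rwa [Iic_union_Ioi, integrableOn_univ] at h

lemma integrable_pow_exp (n : ℕ) :
    Integrable (fun v : ℝ => |v| ^ n * Real.exp (-|v|)) := by
  apply integrable_comp_abs (f := fun x : ℝ => x ^ n * Real.exp (-x))
  have h := Real.GammaIntegral_convergent (s := n + 1) (by positivity)
  apply h.congr_fun ?_ measurableSet_Ioi
  intro x hx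
  simp only [add_sub_cancel_right, Real.rpow_natCast, mul_comm]

lemma integrable_exp_abs' : Integrable (fun v : ℝ => Real.exp (-|v|)) := by
  have := integrable_pow_exp 0
  simpa using this

lemma integrable_id_exp : Integrable (fun v : ℝ => v * Real.exp (-|v|)) := by
  have h1 : Integrable (fun v : ℝ => |v| * Real.exp (-|v|)) := by
    simpa using integrable_pow_exp 1
  apply h1.mono
  · exact (continuous_id.mul (Real.continuous_exp.comp continuous_abs.neg)).aestronglyMeasurable
  · filter_upwards with v
    rw [Real.norm_eq_abs, Real.norm_eq_abs, abs_mul, abs_mul, abs_abs]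

lemma integral_exp_abs' : ∫ v : ℝ, Real.exp (-|v|) = 2 := by
  rw [integral_comp_abs (f := fun x : ℝ => Real.exp (-x)), integral_exp_neg_Ioi_zero]
  norm_num

lemma integral_odd_exp_abs : ∫ v : ℝ, v * Real.exp (-|v|) = 0 := by
  have h : ∫ v : ℝ, (fun v : ℝ => v * Real.exp (-|v|)) (-v) = ∫ v : ℝ, v * Real.exp (-|v|) :=
    integral_neg_eq_self (fun v : ℝ => v * Real.exp (-|v|)) volume
  simp only [abs_neg, neg_mul] at h
  rw [integral_neg] at h
  linarith

lemma integral_sq_exp_abs : ∫ v : ℝ, v ^ 2 * Real.exp (-|v|) = 4 := by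
  have h : ∫ v : ℝ, v ^ 2 * Real.exp (-|v|) = ∫ v : ℝ, |v| ^ 2 * Real.exp (-|v|) := by
    congr 1; ext v; rw [sq_abs]
  rw [h, integral_comp_abs (f := fun x : ℝ => x ^ 2 * Real.exp (-x))]
  have hG : Real.Gamma 3 = 2 := by
    rw [show (3:ℝ) = 2 + 1 by norm_num, Real.Gamma_add_one two_ne_zero, Real.Gamma_two]
    norm_num
  have h2 : ∫ x in Ioi (0:ℝ), x ^ 2 * Real.exp (-x) = Real.Gamma 3 := by
    rw [Real.Gamma_eq_integral (by norm_num : (0:ℝ) < 3)]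
    refine setIntegral_congr_fun measurableSet_Ioi fun x hx => ?_
    rw [mul_comm, show (3:ℝ) - 1 = ((2:ℕ):ℝ) by norm_num, Real.rpow_natCast]
  rw [h2, hG]; norm_num

lemma hasDerivAt_h {α t : ℝ} (ht : 1 + t ≠ 0) :
    HasDerivAt (fun u : ℝ => (1 + u) ^ α - 1 - α * u) (α * (1 + t) ^ (α - 1) - α) t := by
  have h1 : HasDerivAt (fun u : ℝ => 1 + u) 1 t := (hasDerivAt_id t).const_add 1
  have h2 := (Real.hasDerivAt_rpow_const (p := α) (Or.inl ht)).comp t h1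
  exact ((h2.sub_const 1).sub ((hasDerivAt_id t).const_mul α)).congr_deriv (by ring)

lemma hasDerivAt_h' {α t : ℝ} (ht : 1 + t ≠ 0) :
    HasDerivAt (fun u : ℝ => α * (1 + u) ^ (α - 1) - α) (α * (α - 1) * (1 + t) ^ (α - 2)) t := by
  have h1 : HasDerivAt (fun u : ℝ => 1 + u) 1 t := (hasDerivAt_id t).const_add 1
  have h2 := ((Real.hasDerivAt_rpow_const (p := α - 1) (Or.inl ht)).comp t h1).const_mul α
  have h3 := h2.sub_const α
  exact h3.congr_deriv (by rw [show α - 1 - 1 = α - 2 by ring]; ring)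

lemma mvt_abs {f f' : ℝ → ℝ} {u C : ℝ} (hC : 0 ≤ C)
    (hd : ∀ t : ℝ, |t| ≤ |u| → HasDerivAt f (f' t) t)
    (hb : ∀ t : ℝ, |t| ≤ |u| → |f' t| ≤ C) :
    |f u - f 0| ≤ C * |u| := by
  rcases lt_trichotomy u 0 with hu | hu | hu
  · have habs : ∀ t : ℝ, t ∈ Icc u 0 → |t| ≤ |u| := by
      intro t ht
      rw [mem_Icc] at ht
      rw [abs_of_neg hu, abs_le]
      constructor <;> linarith [ht.1, ht.2]
    obtain ⟨c, hc, hceq⟩ := exists_hasDerivAt_eq_slope f f' hu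
      (fun t ht => (hd t (habs t ht)).continuousAt.continuousWithinAt)
      (fun t ht => hd t (habs t (Ioo_subset_Icc_self ht)))
    have hcabs : |c| ≤ |u| := habs c (Ioo_subset_Icc_self hc)
    have heq : f 0 - f u = f' c * (0 - u) := by
      rw [hceq, div_mul_eq_mul_div, mul_div_assoc, div_self (by linarith : 0 - u ≠ 0), mul_one]
    calc |f u - f 0| = |f' c| * |0 - u| := by rw [abs_sub_comm, heq, abs_mul]
      _ ≤ C * |u| := by
          rw [zero_sub, abs_neg]
          exact mul_le_mul_of_nonneg_right (hb c hcabs) (abs_nonneg u)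
  · subst hu
    simp only [sub_self, abs_zero]
    positivity
  · have habs : ∀ t : ℝ, t ∈ Icc 0 u → |t| ≤ |u| := by
      intro t ht
      rw [mem_Icc] at ht
      rw [abs_of_pos hu, abs_le]
      constructor <;> linarith [ht.1, ht.2]
    obtain ⟨c, hc, hceq⟩ := exists_hasDerivAt_eq_slope f f' hu
      (fun t ht => (hd t (habs t ht)).continuousAt.continuousWithinAt)
      (fun t ht => hd t (habs t (Ioo_subset_Icc_self ht)))
    have hcabs : |c| ≤ |u| := habs c (Ioo_subset_Icc_self hc)
    have heq : f u - f 0 = f' c * (u - 0) := by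
      rw [hceq, div_mul_eq_mul_div, mul_div_assoc, div_self (by linarith : u - 0 ≠ 0), mul_one]
    calc |f u - f 0| = |f' c| * |u - 0| := by rw [heq, abs_mul]
      _ ≤ C * |u| := by
          rw [sub_zero]
          exact mul_le_mul_of_nonneg_right (hb c hcabs) (abs_nonneg u)

lemma taylor2 {α : ℝ} (h0 : 0 < α) (h1 : α < 1) {u : ℝ} (hu : |u| ≤ 1/2) :
    |(1 + u) ^ α - 1 - α * u| ≤ 4 * u ^ 2 := by
  have hpos : ∀ t : ℝ, |t| ≤ |u| → (0:ℝ) < 1 + t := by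
    intro t ht
    have := abs_le.mp (ht.trans hu)
    linarith [this.1]
  have hf'' : ∀ t : ℝ, |t| ≤ |u| → |α * (α - 1) * (1 + t) ^ (α - 2)| ≤ 4 := by
    intro t ht
    have hp := hpos t ht
    have h1t : (1:ℝ)/2 ≤ 1 + t := by
      have := abs_le.mp (ht.trans hu); linarith [this.1]
    have hrp : (1 + t) ^ (α - 2) ≤ ((1:ℝ)/2) ^ (α - 2) := by
      apply Real.rpow_le_rpow_of_nonpos (by norm_num) h1t (by linarith)
    have h4 : ((1:ℝ)/2) ^ (α - 2) ≤ 4 := by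
      rw [show ((1:ℝ)/2) = 2⁻¹ by norm_num, Real.inv_rpow (by norm_num),
        ← Real.rpow_neg (by norm_num)]
      calc (2:ℝ) ^ (-(α - 2)) ≤ 2 ^ (2:ℝ) := by
            apply Real.rpow_le_rpow_of_exponent_le (by norm_num); linarith
        _ = 4 := by rw [show (2:ℝ) = ((2:ℕ):ℝ) by norm_num, Real.rpow_natCast]; norm_num
    rw [abs_mul]
    have hama : |α * (α - 1)| ≤ 1 := by
      rw [abs_mul, abs_of_pos h0, abs_of_neg (by linarith : α - 1 < 0)]
      nlinarith
    have habs2 : |(1 + t) ^ (α - 2)| = (1 + t) ^ (α - 2) :=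
      abs_of_pos (Real.rpow_pos_of_pos hp _)
    rw [habs2]
    calc |α * (α - 1)| * (1 + t) ^ (α - 2) ≤ 1 * 4 := by
          apply mul_le_mul hama (hrp.trans h4) (le_of_lt (Real.rpow_pos_of_pos hp _)) one_pos.le
      _ = 4 := by norm_num
  have hf' : ∀ t : ℝ, |t| ≤ |u| → |α * (1 + t) ^ (α - 1) - α| ≤ 4 * |u| := by
    intro t ht
    have key := mvt_abs (f := fun s : ℝ => α * (1 + s) ^ (α - 1) - α)
      (f' := fun s : ℝ => α * (α - 1) * (1 + s) ^ (α - 2)) (u := t)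
      (by norm_num)
      (fun s hs => hasDerivAt_h' (ne_of_gt (hpos s (hs.trans ht))))
      (fun s hs => hf'' s (hs.trans ht))
    simp only [add_zero, Real.one_rpow, mul_one, sub_self, sub_zero] at key
    calc |α * (1 + t) ^ (α - 1) - α| ≤ 4 * |t| := key
      _ ≤ 4 * |u| := by linarith [abs_nonneg t]
  have key := mvt_abs (f := fun s : ℝ => (1 + s) ^ α - 1 - α * s)
    (f' := fun s : ℝ => α * (1 + s) ^ (α - 1) - α) (u := u)
    (by positivity)
    (fun s hs => hasDerivAt_h (ne_of_gt (hpos s hs)))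
    hf'
  simp only [add_zero, Real.one_rpow, mul_zero, sub_zero, sub_self] at key
  calc |(1 + u) ^ α - 1 - α * u| ≤ 4 * |u| * |u| := key
    _ = 4 * u ^ 2 := by rw [mul_assoc, ← abs_mul, ← sq, abs_sq]

lemma lim_h {α : ℝ} (h0 : 0 < α) (h1 : α < 1) :
    Tendsto (fun u : ℝ => ((1 + u) ^ α - 1 - α * u) / u ^ 2) (𝓝[≠] (0:ℝ))
      (𝓝 (α * (α - 1) / 2)) := by
  have hne : ∀ᶠ u : ℝ in 𝓝 (0:ℝ), 1 + u ≠ 0 := by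
    have : Ioo (-(1:ℝ)/2) (1/2) ∈ 𝓝 (0:ℝ) := Ioo_mem_nhds (by norm_num) (by norm_num)
    filter_upwards [this] with u hu
    rw [mem_Ioo] at hu
    intro h
    have : u = -1 := by linarith
    rw [this] at hu
    norm_num at hu
  apply HasDerivAt.lhopital_zero_nhdsNE
    (f' := fun u : ℝ => α * (1 + u) ^ (α - 1) - α) (g' := fun u : ℝ => 2 * u)
  · exact (eventually_nhdsWithin_of_eventually_nhds hne).mono fun u hu => hasDerivAt_h hu
  · filter_upwards with u
    simpa using hasDerivAt_pow 2 u
  · filter_upwards [self_mem_nhdsWithin] with u hu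
    simp only [mem_compl_iff, mem_singleton_iff] at hu
    intro h
    exact hu (by linarith)
  · have hc : ContinuousAt (fun u : ℝ => (1 + u) ^ α - 1 - α * u) 0 :=
      (hasDerivAt_h (by norm_num : (1:ℝ) + 0 ≠ 0)).continuousAt
    have := hc.tendsto
    simp only [add_zero, Real.one_rpow, mul_zero, sub_zero, sub_self] at this
    exact tendsto_nhdsWithin_of_tendsto_nhds this
  · have : Tendsto (fun u : ℝ => u ^ 2) (𝓝 0) (𝓝 (0:ℝ)) := by
      simpa using (continuous_pow 2).tendsto (0:ℝ)
    exact tendsto_nhdsWithin_of_tendsto_nhds this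
  · have hd : HasDerivAt (fun u : ℝ => α * (1 + u) ^ (α - 1) - α) (α * (α - 1)) 0 := by
      have := hasDerivAt_h' (α := α) (t := 0) (by norm_num)
      simpa using this
    have hs := hasDerivAt_iff_tendsto_slope.mp hd
    have hs2 : Tendsto (fun u : ℝ => (α * (1 + u) ^ (α - 1) - α) / u) (𝓝[≠] 0)
        (𝓝 (α * (α - 1))) := by
      apply hs.congr
      intro u
      rw [slope_def_field]
      simp
    have h3 := hs2.const_mul (1/2 : ℝ)
    have heq : α * (α - 1) / 2 = 1 / 2 * (α * (α - 1)) := by ring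
    rw [heq]
    apply h3.congr
    intro u
    ring

lemma keyeq {α s v : ℝ} (hs0 : 0 < s) (hsv : 0 < s + v) :
    s ^ ((2:ℝ) - α) * (|s + v| ^ α - s ^ α - α * v * s ^ (α - 1))
      = s ^ (2:ℝ) * ((1 + v / s) ^ α - 1 - α * (v / s)) := by
  have hfac : |s + v| ^ α = s ^ α * (1 + v / s) ^ α := by
    rw [abs_of_pos hsv,
      ← Real.mul_rpow hs0.le (by rw [show (1:ℝ) + v / s = (s + v) / s by field_simp]; positivity)]
    congr 1; field_simp
  have hs2 : s ^ ((2:ℝ) - α) * s ^ α = s ^ (2:ℝ) := by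
    rw [← Real.rpow_add hs0]; ring_nf
  have hs1 : s ^ ((2:ℝ) - α) * s ^ (α - 1) = s := by
    rw [← Real.rpow_add hs0]; norm_num
  rw [hfac, mul_sub, mul_sub, ← mul_assoc, hs2,
    show s ^ ((2:ℝ) - α) * (α * v * s ^ (α - 1)) = α * v * (s ^ ((2:ℝ) - α) * s ^ (α - 1)) by ring,
    hs1, Real.rpow_two]
  field_simp

lemma ptlim {α : ℝ} (h0 : 0 < α) (h1 : α < 1) (v : ℝ) :
    Tendsto (fun s : ℝ => s ^ ((2:ℝ) - α) * (|s + v| ^ α - s ^ α - α * v * s ^ (α - 1)))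
      atTop (𝓝 (α * (α - 1) * v ^ 2 / 2)) := by
  rcases eq_or_ne v 0 with rfl | hv
  · simp only [add_zero, mul_zero, zero_mul, zero_pow, mul_zero, zero_div]
    apply Tendsto.congr' ?_ tendsto_const_nhds
    filter_upwards [eventually_gt_atTop (0:ℝ)] with s hs
    rw [abs_of_pos hs]
    ring
  · have lim1 : Tendsto (fun s : ℝ => v / s) atTop (𝓝[≠] (0:ℝ)) := by
      rw [tendsto_nhdsWithin_iff]
      constructor
      · exact tendsto_const_nhds.div_atTop tendsto_id
      · filter_upwards [eventually_gt_atTop (0:ℝ)] with s hs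
        simp only [mem_compl_iff, mem_singleton_iff]
        exact div_ne_zero hv (ne_of_gt hs)
    have lim2 := (lim_h h0 h1).comp lim1
    have lim3 := lim2.const_mul (v ^ 2)
    have heq : α * (α - 1) * v ^ 2 / 2 = v ^ 2 * (α * (α - 1) / 2) := by ring
    rw [heq]
    apply lim3.congr'
    filter_upwards [eventually_gt_atTop (max |v| 0)] with s hs
    have hs0 : 0 < s := lt_of_le_of_lt (le_max_right _ _) hs
    have hsv : 0 < s + v := by
      have h' : |v| < s := lt_of_le_of_lt (le_max_left _ _) hs
      have := abs_lt.mp h'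
      linarith [this.1]
    simp only [Function.comp_apply]
    rw [keyeq hs0 hsv]
    have hvs2 : (v / s) ^ 2 = v ^ 2 / s ^ (2:ℝ) := by
      rw [div_pow, Real.rpow_two]
    rw [hvs2, Real.rpow_two]
    have hsne : (s:ℝ) ^ 2 ≠ 0 := by positivity
    field_simp

lemma rpow_le_one_add {x p : ℝ} (hx : 0 ≤ x) (h0 : 0 ≤ p) (h1 : p ≤ 1) : x ^ p ≤ 1 + x := by
  rcases le_or_gt x 1 with h | h
  · calc x ^ p ≤ 1 := Real.rpow_le_one hx h h0
      _ ≤ 1 + x := by linarith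
  · calc x ^ p ≤ x ^ (1:ℝ) := Real.rpow_le_rpow_of_exponent_le h.le h1
      _ = x := Real.rpow_one x
      _ ≤ 1 + x := by linarith

lemma cont_main {α : ℝ} (h0 : 0 < α) (s : ℝ) :
    Continuous (fun v : ℝ => Real.exp (-|v|) * |s + v| ^ α) := by
  apply Continuous.mul
  · exact Real.continuous_exp.comp continuous_abs.neg
  · apply Continuous.rpow_const
    · exact (continuous_const.add continuous_id).abs
    · intro v; right; exact h0.le

lemma int_main {α : ℝ} (h0 : 0 < α) (h1 : α ≤ 1) (s : ℝ) :
    Integrable (fun v : ℝ => Real.exp (-|v|) * |s + v| ^ α) := by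
  have hmaj : Integrable (fun v : ℝ => (1 + |s|) * Real.exp (-|v|) + |v| * Real.exp (-|v|)) :=
    (integrable_exp_abs'.const_mul (1 + |s|)).add (by simpa using integrable_pow_exp 1)
  apply hmaj.mono (cont_main h0 s).aestronglyMeasurable
  filter_upwards with v
  have hnn : (0:ℝ) ≤ |s + v| ^ α := Real.rpow_nonneg (abs_nonneg _) _
  rw [Real.norm_eq_abs, Real.norm_eq_abs, abs_mul, abs_of_pos (Real.exp_pos _),
    abs_of_nonneg hnn]
  have hb : |s + v| ^ α ≤ 1 + |s| + |v| := by
    calc |s + v| ^ α ≤ 1 + |s + v| := rpow_le_one_add (abs_nonneg _) h0.le h1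
      _ ≤ 1 + (|s| + |v|) := by linarith [abs_add_le s v]
      _ = 1 + |s| + |v| := by ring
  have key : Real.exp (-|v|) * |s + v| ^ α
      ≤ (1 + |s|) * Real.exp (-|v|) + |v| * Real.exp (-|v|) := by
    calc Real.exp (-|v|) * |s + v| ^ α ≤ Real.exp (-|v|) * (1 + |s| + |v|) :=
          mul_le_mul_of_nonneg_left hb (Real.exp_pos _).le
      _ = (1 + |s|) * Real.exp (-|v|) + |v| * Real.exp (-|v|) := by ring
  exact key.trans (le_abs_self _)

end Aux

section Main

lemma bound_main {α : ℝ} (h0 : 0 < α) (h1 : α < 1) {s v : ℝ} (hs : 1 ≤ s) :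
    |s ^ ((2:ℝ) - α) * (|s + v| ^ α - s ^ α - α * v * s ^ (α - 1))|
      ≤ 10 * v ^ 2 + 12 * |v| ^ 3 := by
  have hs0 : (0:ℝ) < s := by linarith
  rcases le_or_gt |v| (s/2) with h | h
  · -- Taylor regime
    have hsv : 0 < s + v := by
      have := abs_le.mp h
      linarith [this.1]
    have hu : |v / s| ≤ 1/2 := by
      rw [abs_div, abs_of_pos hs0, div_le_iff₀ hs0]
      linarith
    rw [keyeq hs0 hsv, abs_mul, abs_of_nonneg (Real.rpow_nonneg hs0.le _)]
    have ht := taylor2 h0 h1 hu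
    have hb : s ^ (2:ℝ) * |(1 + v / s) ^ α - 1 - α * (v / s)|
        ≤ s ^ (2:ℝ) * (4 * (v / s) ^ 2) :=
      mul_le_mul_of_nonneg_left ht (Real.rpow_nonneg hs0.le _)
    have heq : s ^ (2:ℝ) * (4 * (v / s) ^ 2) = 4 * v ^ 2 := by
      rw [Real.rpow_two, div_pow]
      field_simp
    have := hb.trans_eq heq
    nlinarith [sq_nonneg v, abs_nonneg v, pow_nonneg (abs_nonneg v) 3]
  · -- tail regime
    have hsv2 : s < 2 * |v| := by linarith
    have hv1 : (1:ℝ)/2 ≤ |v| := by linarith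
    have tri : abs (|s + v| ^ α - s ^ α - α * v * s ^ (α - 1))
        ≤ |s + v| ^ α + s ^ α + α * |v| * s ^ (α - 1) := by
      have t1 : abs (|s + v| ^ α - s ^ α - α * v * s ^ (α - 1))
          ≤ abs (|s + v| ^ α - s ^ α) + abs (α * v * s ^ (α - 1)) := abs_sub _ _
      have t2 : abs (|s + v| ^ α - s ^ α) ≤ |s + v| ^ α + s ^ α := by
        have h' := abs_sub (|s + v| ^ α) (s ^ α)
        rwa [abs_of_nonneg (Real.rpow_nonneg (abs_nonneg _) _),
          abs_of_nonneg (Real.rpow_nonneg hs0.le _)] at h'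
      have t3 : abs (α * v * s ^ (α - 1)) = α * |v| * s ^ (α - 1) := by
        rw [abs_mul, abs_mul, abs_of_pos h0,
          abs_of_nonneg (Real.rpow_nonneg hs0.le _)]
      linarith
    rw [abs_mul, abs_of_nonneg (Real.rpow_nonneg hs0.le _)]
    have step : s ^ ((2:ℝ) - α) * abs (|s + v| ^ α - s ^ α - α * v * s ^ (α - 1))
        ≤ s ^ ((2:ℝ) - α) * |s + v| ^ α + s ^ (2:ℝ) + α * |v| * s := by
      have hs2 : s ^ ((2:ℝ) - α) * s ^ α = s ^ (2:ℝ) := by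
        rw [← Real.rpow_add hs0]; ring_nf
      have hs1 : s ^ ((2:ℝ) - α) * s ^ (α - 1) = s := by
        rw [← Real.rpow_add hs0]; norm_num
      have := mul_le_mul_of_nonneg_left tri (Real.rpow_nonneg hs0.le ((2:ℝ) - α))
      calc s ^ ((2:ℝ) - α) * abs (|s + v| ^ α - s ^ α - α * v * s ^ (α - 1))
          ≤ s ^ ((2:ℝ) - α) * (|s + v| ^ α + s ^ α + α * |v| * s ^ (α - 1)) := this
        _ = s ^ ((2:ℝ) - α) * |s + v| ^ α + s ^ ((2:ℝ) - α) * s ^ α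
            + α * |v| * (s ^ ((2:ℝ) - α) * s ^ (α - 1)) := by ring
        _ = s ^ ((2:ℝ) - α) * |s + v| ^ α + s ^ (2:ℝ) + α * |v| * s := by rw [hs2, hs1]
    -- estimates
    have b4 : s ^ ((2:ℝ) - α) ≤ s ^ (2:ℝ) := by
      apply Real.rpow_le_rpow_of_exponent_le hs
      linarith
    have b5 : s ^ (2:ℝ) = s ^ 2 := Real.rpow_two s
    have b6 : s ^ 2 ≤ 4 * v ^ 2 := by nlinarith [abs_nonneg v, sq_abs v]
    have b1 : |s + v| ≤ 3 * |v| := by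
      calc |s + v| ≤ |s| + |v| := abs_add_le s v
        _ = s + |v| := by rw [abs_of_pos hs0]
        _ ≤ 3 * |v| := by linarith
    have b2 : |s + v| ^ α ≤ (3 * |v|) ^ α :=
      Real.rpow_le_rpow (abs_nonneg _) b1 h0.le
    have b3 : (3 * |v|) ^ α ≤ 1 + 3 * |v| := rpow_le_one_add (by positivity) h0.le h1.le
    have e1 : s ^ ((2:ℝ) - α) * |s + v| ^ α ≤ 4 * v ^ 2 * (1 + 3 * |v|) := by
      apply mul_le_mul (by rw [← b5] at b6; linarith) (b2.trans b3)
        (Real.rpow_nonneg (abs_nonneg _) _) (by positivity)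
    have e2 : s ^ (2:ℝ) ≤ 4 * v ^ 2 := by rw [b5]; exact b6
    have e3 : α * |v| * s ≤ 2 * v ^ 2 := by
      have : α * |v| ≤ |v| := by nlinarith [abs_nonneg v]
      nlinarith [abs_nonneg v, sq_abs v]
    have habc : |v| ^ 3 = v ^ 2 * |v| := by
      rw [pow_succ, sq_abs]
    have e1' : s ^ ((2:ℝ) - α) * |s + v| ^ α ≤ 4 * v ^ 2 + 12 * |v| ^ 3 :=
      e1.trans_eq (by rw [habc]; ring)
    refine le_trans step ?_
    refine le_trans (add_le_add (add_le_add e1' e2) e3) ?_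
    linarith

lemma tendsto_J {α : ℝ} (h0 : 0 < α) (h1 : α < 1) :
    Tendsto (fun s : ℝ => ∫ v : ℝ,
        Real.exp (-|v|) * (s ^ ((2:ℝ) - α) * (|s + v| ^ α - s ^ α - α * v * s ^ (α - 1))))
      atTop (𝓝 (2 * (α * (α - 1)))) := by
  have hval : (∫ v : ℝ, Real.exp (-|v|) * (α * (α - 1) * v ^ 2 / 2)) = 2 * (α * (α - 1)) := by
    have heq : ∀ v : ℝ, Real.exp (-|v|) * (α * (α - 1) * v ^ 2 / 2)
        = (α * (α - 1) / 2) * (v ^ 2 * Real.exp (-|v|)) := fun v => by ring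
    simp_rw [heq]
    rw [integral_const_mul, integral_sq_exp_abs]
    ring
  rw [← hval]
  apply tendsto_integral_filter_of_dominated_convergence
    (bound := fun v : ℝ => Real.exp (-|v|) * (10 * v ^ 2 + 12 * |v| ^ 3))
  · filter_upwards [eventually_gt_atTop (0:ℝ)] with s hs
    apply Continuous.aestronglyMeasurable
    apply Continuous.mul (Real.continuous_exp.comp continuous_abs.neg)
    apply Continuous.mul continuous_const
    apply Continuous.sub
    apply Continuous.sub
    · apply Continuous.rpow_const (continuous_const.add continuous_id).abs
      intro v; right; exact h0.le
    · exact continuous_const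
    · exact (continuous_const.mul continuous_id).mul continuous_const
  · filter_upwards [eventually_ge_atTop (1:ℝ)] with s hs
    filter_upwards with v
    rw [Real.norm_eq_abs, abs_mul, abs_of_pos (Real.exp_pos _)]
    exact mul_le_mul_of_nonneg_left (bound_main h0 h1 hs) (Real.exp_pos _).le
  · have hi : Integrable (fun v : ℝ =>
        10 * (|v| ^ 2 * Real.exp (-|v|)) + 12 * (|v| ^ 3 * Real.exp (-|v|))) :=
      ((integrable_pow_exp 2).const_mul 10).add ((integrable_pow_exp 3).const_mul 12)
    apply hi.congr
    filter_upwards with v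
    rw [sq_abs]
    ring
  · filter_upwards with v
    exact ((ptlim h0 h1 v).const_mul (Real.exp (-|v|)))

end Main

/-- For every `H ∈ (0,1/2)`,
`𝒞_Z(s) = s^{2H-2}/Γ(2H−1) + o(s^{2H-2})` as `s → ∞`, i.e.
`lim_{s→∞} ( 𝒞_Z(s) − s^{2H-2}/Γ(2H−1) ) / s^{2H-2} = 0`,
with `Γ(2H−1)` the Gamma function at `2H−1 ∈ (−1,0)`. -/
theorem corrZ_longTime_expansion (H : ℝ) (hH : H ∈ Set.Ioo (0 : ℝ) (1/2)) :
    Tendsto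
      (fun s : ℝ =>
        (corrZ H s - s ^ (2 * H - 2) / Real.Gamma (2 * H - 1)) / s ^ (2 * H - 2))
      atTop (nhds 0) := by
  obtain ⟨hH1, hH2⟩ := hH
  have h0 : (0:ℝ) < 2 * H := by linarith
  have h1 : (2:ℝ) * H < 1 := by linarith
  have h2Hne : (2:ℝ) * H ≠ 0 := ne_of_gt h0
  have h2H1ne : (2:ℝ) * H - 1 ≠ 0 := by linarith
  have hGm_ne : Real.Gamma (2 * H - 1) ≠ 0 := by
    apply Real.Gamma_ne_zero
    intro m heq
    have hm : (m:ℝ) = 1 - 2 * H := by linarith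
    have hmpos : (0:ℝ) < (m:ℝ) := by rw [hm]; linarith
    have hm1 : 1 ≤ (m:ℕ) := Nat.one_le_iff_ne_zero.mpr (by
      intro hz
      rw [hz] at hmpos
      norm_num at hmpos)
    have : (1:ℝ) ≤ (m:ℝ) := by exact_mod_cast hm1
    linarith
  have hGrel : Real.Gamma (2 * H + 1) = (2 * H) * ((2 * H - 1) * Real.Gamma (2 * H - 1)) := by
    rw [Real.Gamma_add_one h2Hne, show (2:ℝ) * H = (2 * H - 1) + 1 by ring,
      Real.Gamma_add_one h2H1ne]
    ring_nf
  have main := Tendsto.sub_const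
    ((tendsto_J h0 h1).const_mul ((Real.Gamma (2 * H + 1))⁻¹ * (1/2)))
    (Real.Gamma (2 * H - 1))⁻¹
  have hval0 : (Real.Gamma (2 * H + 1))⁻¹ * (1/2) * (2 * (2 * H * (2 * H - 1)))
      - (Real.Gamma (2 * H - 1))⁻¹ = 0 := by
    rw [hGrel]
    field_simp
    ring
  rw [hval0] at main
  apply Tendsto.congr' ?_ main
  filter_upwards [eventually_ge_atTop (1:ℝ)] with s hs
  have hs0 : (0:ℝ) < s := by linarith
  have hβ : s ^ (2 * H - 2) ≠ 0 := ne_of_gt (Real.rpow_pos_of_pos hs0 _)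
  have hinv : s ^ ((2:ℝ) - 2 * H) * s ^ (2 * H - 2) = 1 := by
    rw [← Real.rpow_add hs0, show (2:ℝ) - 2 * H + (2 * H - 2) = 0 by ring, Real.rpow_zero]
  have hb : (∫ v : ℝ, Real.exp (-|v|) * (s ^ ((2:ℝ) - 2 * H) *
        (|s + v| ^ (2 * H) - s ^ (2 * H) - (2 * H) * v * s ^ (2 * H - 1))))
      = s ^ ((2:ℝ) - 2 * H) * ∫ v : ℝ, Real.exp (-|v|) *
          (|s + v| ^ (2 * H) - s ^ (2 * H) - (2 * H) * v * s ^ (2 * H - 1)) := by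
    rw [← integral_const_mul]
    congr 1
    ext v
    ring
  have I1 := int_main h0 h1.le s
  have i2 : Integrable (fun v : ℝ => s ^ (2 * H) * Real.exp (-|v|)) :=
    integrable_exp_abs'.const_mul _
  have i3 : Integrable (fun v : ℝ => (2 * H * s ^ (2 * H - 1)) * (v * Real.exp (-|v|))) :=
    integrable_id_exp.const_mul _
  have ha : (∫ v : ℝ, Real.exp (-|v|) *
        (|s + v| ^ (2 * H) - s ^ (2 * H) - (2 * H) * v * s ^ (2 * H - 1)))
      = (∫ v : ℝ, Real.exp (-|v|) * |s + v| ^ (2 * H)) - 2 * s ^ (2 * H) := by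
    have heq : (fun v : ℝ => Real.exp (-|v|) *
          (|s + v| ^ (2 * H) - s ^ (2 * H) - (2 * H) * v * s ^ (2 * H - 1)))
        = fun v : ℝ => (Real.exp (-|v|) * |s + v| ^ (2 * H)
            - s ^ (2 * H) * Real.exp (-|v|))
            - (2 * H * s ^ (2 * H - 1)) * (v * Real.exp (-|v|)) := by
      ext v; ring
    have i12 : Integrable (fun v : ℝ => Real.exp (-|v|) * |s + v| ^ (2 * H)
        - s ^ (2 * H) * Real.exp (-|v|)) := I1.sub i2
    rw [heq, integral_sub i12 i3, integral_sub I1 i2, integral_const_mul,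
      integral_const_mul, integral_exp_abs', integral_odd_exp_abs]
    ring
  rw [hb, ha, corrZ, eq_div_iff hβ]
  linear_combination ((Real.Gamma (2 * H + 1))⁻¹ * (1/2) *
    ((∫ v : ℝ, Real.exp (-|v|) * |s + v| ^ (2 * H)) - 2 * s ^ (2 * H))) * hinv
end
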